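/- Let 1 ≤ k1 ≤ t1 ≤ min(n1, m), 1 ≤ k2 ≤ t2 ≤ min(n2, m), t1·t2 ≤ m, and t1 − k1 ≤ t2 − k2. Let g1 ∈ L^{n1} with wt_R(g1) = t1 and g2 ∈ L^{n2} with wt_R(g2) = t2, and set G1 = Moore(g1, k1), G2 = Moore(g2, k2). Then every nonzero codeword of the row space of G1 ⊗ G2 (the extended Gabidulin–Kronecker product code) has rank weight at least t2 − k2 + 1, and there exists a nonzero codeword of the row space of G1 ⊗ G2 with rank weight at most (t1 − k1 + 1)·(t2 − k2 + 1). -/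

import Mathlib

open Matrix Kronecker

/-- Rank weight of a vector over the extension `L` of the base field `K`. -/
noncomputable def rankWeight (K : Type*) {L : Type*} [Field K] [Field L] [Algebra K L]
    {ι : Type*} (v : ι → L) : ℕ :=
  Module.finrank K (Submodule.span K (Set.range v))

/-- The `k × n` Moore matrix of `g`: entry `(i, j)` is `g j ^ q ^ i`. -/
def moore (q : ℕ) {L : Type*} [Field L] {n : ℕ} (g : Fin n → L) (k : ℕ) :
    Matrix (Fin k) (Fin n) L :=
  Matrix.of fun i j => g j ^ q ^ (i : ℕ)

open Polynomial

section Aux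

variable {q : ℕ} {K L : Type*} [Field K] [Fintype K] [Field L] [Algebra K L]

lemma l_add_pow (hq : Fintype.card K = q) (x y : L) (i : ℕ) :
    (x + y) ^ q ^ i = x ^ q ^ i + y ^ q ^ i := by
  set p := ringChar K with hp
  haveI : CharP K p := ringChar.charP K
  haveI : Fact p.Prime := ⟨CharP.char_is_prime K p⟩
  haveI : CharP L p := charP_of_injective_algebraMap (algebraMap K L).injective p
  obtain ⟨n, -, hn⟩ := FiniteField.card K p
  rw [← hq, hn, ← pow_mul]
  exact add_pow_char_pow x y p _

lemma l_smul_pow (hq : Fintype.card K = q) (μ : K) (x : L) (i : ℕ) :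
    (μ • x) ^ q ^ i = μ • x ^ q ^ i := by
  rw [Algebra.smul_def, Algebra.smul_def, mul_pow, ← map_pow]
  rw [← hq, FiniteField.pow_card_pow]

/-- The `K`-linear map `x ↦ ∑ i, a i * x ^ q ^ i`. -/
noncomputable def qmap (hq : Fintype.card K = q) {k : ℕ} (a : Fin k → L) : L →ₗ[K] L where
  toFun x := ∑ i : Fin k, a i * x ^ q ^ (i : ℕ)
  map_add' x y := by
    simp only [l_add_pow hq, mul_add]
    rw [Finset.sum_add_distrib]
  map_smul' μ x := by
    simp only [l_smul_pow hq, RingHom.id_apply, Finset.smul_sum, mul_smul_comm]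

lemma qmap_apply (hq : Fintype.card K = q) {k : ℕ} (a : Fin k → L) (x : L) :
    qmap hq a x = ∑ i : Fin k, a i * x ^ q ^ (i : ℕ) := rfl

end Aux

section Aux2

variable {q : ℕ} {K L : Type*} [Field K] [Fintype K] [Field L] [Algebra K L]

lemma qmap_ker_finrank (hq : Fintype.card K = q) [FiniteDimensional K L]
    {k : ℕ} (a : Fin k → L) (ha : a ≠ 0) :
    Module.finrank K (LinearMap.ker (qmap hq a)) ≤ k - 1 := by
  classical
  have hq2 : 2 ≤ q := hq ▸ Fintype.one_lt_card
  -- the polynomial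
  set P : L[X] := ∑ i : Fin k, Polynomial.C (a i) * Polynomial.X ^ q ^ (i : ℕ) with hP
  obtain ⟨i0, hi0⟩ : ∃ i0, a i0 ≠ 0 := by
    by_contra h
    push_neg at h
    exact ha (funext h)
  have hcoeff : P.coeff (q ^ (i0 : ℕ)) = a i0 := by
    rw [hP, Polynomial.finset_sum_coeff]
    rw [Finset.sum_eq_single i0]
    · simp
    · intro b _ hb
      have : q ^ (b : ℕ) ≠ q ^ (i0 : ℕ) := fun h => hb (Fin.ext
        (Nat.pow_right_injective hq2 h))
      simp only [Polynomial.coeff_C_mul, Polynomial.coeff_X_pow]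
      rw [if_neg (fun h => this h.symm), mul_zero]
    · simp
  have hPne : P ≠ 0 := fun h => hi0 (by rw [← hcoeff, h, Polynomial.coeff_zero])
  have hdeg : P.natDegree ≤ q ^ (k - 1) := by
    refine (Polynomial.natDegree_sum_le _ _).trans ?_
    rw [Finset.fold_max_le]
    refine ⟨Nat.zero_le _, fun i _ => ?_⟩
    refine (Polynomial.natDegree_C_mul_le _ _).trans ?_
    rw [Polynomial.natDegree_X_pow]
    exact Nat.pow_le_pow_right (by omega) (by omega)
  -- kernel elements are roots
  haveI : Finite L := Module.finite_of_finite K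
  haveI : Fintype L := Fintype.ofFinite L
  have hroot : ∀ x : L, x ∈ LinearMap.ker (qmap hq a) → P.IsRoot x := by
    intro x hx
    have : qmap hq a x = 0 := hx
    rw [qmap_apply] at this
    simp only [Polynomial.IsRoot, hP, Polynomial.eval_finset_sum, Polynomial.eval_mul,
      Polynomial.eval_C, Polynomial.eval_pow, Polynomial.eval_X]
    exact this
  set Z : Finset L := Set.toFinset (LinearMap.ker (qmap hq a) : Set L) with hZ
  have hZcard : Z.card ≤ P.natDegree := by
    refine Polynomial.card_le_degree_of_subset_roots ?_
    intro x hx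
    rw [Finset.mem_val, hZ, Set.mem_toFinset] at hx
    rw [Polynomial.mem_roots hPne]
    exact hroot x hx
  have hZcard' : Z.card = q ^ Module.finrank K (LinearMap.ker (qmap hq a)) := by
    have hcard := Module.card_eq_pow_finrank (K := K) (V := LinearMap.ker (qmap hq a))
    rw [hq] at hcard
    rw [hZ, Set.toFinset_card, ← hcard]
    exact Fintype.card_congr (Equiv.refl _)
  have : q ^ Module.finrank K (LinearMap.ker (qmap hq a)) ≤ q ^ (k - 1) :=
    hZcard' ▸ (hZcard.trans hdeg)
  exact (Nat.pow_le_pow_iff_right (by omega)).mp this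

end Aux2

section Aux3

variable {q : ℕ} {K L : Type*} [Field K] [Fintype K] [Field L] [Algebra K L]

lemma span_qmap (hq : Fintype.card K = q) {k n : ℕ} (a : Fin k → L) (g : Fin n → L) :
    Submodule.span K (Set.range fun j => qmap hq a (g j)) =
      (Submodule.span K (Set.range g)).map (qmap hq a) := by
  have h : (Set.range fun j => qmap hq a (g j)) = qmap hq a '' Set.range g :=
    Set.range_comp _ _
  rw [h, Submodule.span_image]

lemma qmap_lb (hq : Fintype.card K = q) [FiniteDimensional K L] {k t n : ℕ}
    (hk : 1 ≤ k) (hkt : k ≤ t) (a : Fin k → L) (g : Fin n → L)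
    (hg : Module.finrank K (Submodule.span K (Set.range g)) = t)
    (j0 : Fin n) (hne : qmap hq a (g j0) ≠ 0) :
    t - k + 1 ≤ Module.finrank K ((Submodule.span K (Set.range g)).map (qmap hq a)) := by
  have ha : a ≠ 0 := by
    rintro rfl
    exact hne (by simp [qmap_apply])
  have hker : Module.finrank K (LinearMap.ker (qmap hq a)) ≤ k - 1 :=
    qmap_ker_finrank hq a ha
  have hrn := LinearMap.finrank_range_add_finrank_ker
    ((qmap hq a).domRestrict (Submodule.span K (Set.range g)))
  rw [LinearMap.range_domRestrict, hg] at hrn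
  have hd : Module.finrank K
      (LinearMap.ker ((qmap hq a).domRestrict (Submodule.span K (Set.range g)))) ≤
      Module.finrank K (LinearMap.ker (qmap hq a)) := by
    apply LinearMap.finrank_le_finrank_of_injective
      (f := LinearMap.codRestrict (LinearMap.ker (qmap hq a))
        (((Submodule.span K (Set.range g)).subtype).comp
          (LinearMap.ker ((qmap hq a).domRestrict (Submodule.span K (Set.range g)))).subtype)
        (fun x => x.2))
    intro x y hxy
    have h1 := congrArg Subtype.val hxy
    exact Subtype.ext (Subtype.ext h1)
  omega

end Aux3

section Aux4

variable {q : ℕ} {K L : Type*} [Field K] [Fintype K] [Field L] [Algebra K L]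

lemma l_sum_pow (hq : Fintype.card K = q) {ι : Type*} (s : Finset ι) (f : ι → L) :
    (∑ i ∈ s, f i) ^ q = ∑ i ∈ s, f i ^ q := by
  classical
  have hq1 : 1 ≤ q := hq ▸ Fintype.card_pos
  induction s using Finset.induction with
  | empty => simp [zero_pow (by omega : q ≠ 0)]
  | @insert b s h ih =>
    rw [Finset.sum_insert h, Finset.sum_insert h, ← ih]
    simpa [pow_one] using l_add_pow (L := L) hq (f b) (∑ i ∈ s, f i) 1

lemma qmap_step (hq : Fintype.card K = q) {d : ℕ} (a : Fin (d + 1) → L) (c : L) :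
    ∃ a' : Fin (d + 2) → L, a' (Fin.last (d + 1)) = a (Fin.last d) ^ q ∧
      ∀ x : L, qmap hq a' x = (qmap hq a x) ^ q - c * qmap hq a x := by
  classical
  set a' : Fin (d + 2) → L := Fin.cons (-(c * a 0)) (Fin.snoc
      (fun i : Fin d => a i.castSucc ^ q - c * a i.succ) (a (Fin.last d) ^ q)) with ha'
  refine ⟨a', ?_, ?_⟩
  · rw [ha', ← Fin.succ_last, Fin.cons_succ, Fin.snoc_last]
  · intro x
    rw [qmap_apply, qmap_apply, l_sum_pow hq]
    have h1' : (∑ j : Fin (d + 2),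
          (Fin.cons (α := fun _ => L) 0 (fun i : Fin (d + 1) => a i ^ q) j) * x ^ q ^ (j : ℕ))
        = ∑ i : Fin (d + 1), (a i * x ^ q ^ (i : ℕ)) ^ q := by
      rw [Fin.sum_univ_succ]
      simp only [Fin.cons_zero, Fin.cons_succ, zero_mul, zero_add, Fin.val_succ]
      refine Finset.sum_congr rfl fun i _ => ?_
      rw [mul_pow, ← pow_mul, ← pow_succ]
    have h1 : ∑ i : Fin (d + 1), (a i * x ^ q ^ (i : ℕ)) ^ q
        = ∑ j : Fin (d + 2),
          (Fin.cons (α := fun _ => L) 0 (fun i : Fin (d + 1) => a i ^ q) j) * x ^ q ^ (j : ℕ) :=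
      h1'.symm
    have h2' : (∑ j : Fin (d + 2),
          (Fin.snoc (α := fun _ => L) (fun i : Fin (d + 1) => c * a i) 0 j) * x ^ q ^ (j : ℕ))
        = ∑ i : Fin (d + 1), c * a i * x ^ q ^ (i : ℕ) := by
      rw [Fin.sum_univ_castSucc]
      simp only [Fin.snoc_castSucc, Fin.snoc_last, zero_mul, add_zero, Fin.coe_castSucc]
    have h2 : c * ∑ i : Fin (d + 1), a i * x ^ q ^ (i : ℕ)
        = ∑ j : Fin (d + 2),
          (Fin.snoc (α := fun _ => L) (fun i : Fin (d + 1) => c * a i) 0 j) * x ^ q ^ (j : ℕ) := by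
      rw [h2', Finset.mul_sum]
      exact Finset.sum_congr rfl fun i _ => by ring
    rw [h1, h2, ← Finset.sum_sub_distrib]
    refine Finset.sum_congr rfl fun j _ => ?_
    rw [← sub_mul]
    congr 1
    refine Fin.cases ?_ (fun i => ?_) j
    · have h0 : Fin.snoc (α := fun _ => L) (fun i : Fin (d + 1) => c * a i) 0 (0 : Fin (d + 2))
          = c * a 0 := by
        rw [show (0 : Fin (d + 2)) = Fin.castSucc 0 from rfl, Fin.snoc_castSucc]
      rw [ha', Fin.cons_zero, h0, Fin.cons_zero]
      ring
    · rw [ha', Fin.cons_succ]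
      refine Fin.lastCases ?_ (fun i' => ?_) i
      · rw [Fin.snoc_last, Fin.succ_last, Fin.snoc_last, ← Fin.succ_last, Fin.cons_succ,
          sub_zero]
      · rw [Fin.snoc_castSucc, Fin.succ_castSucc, Fin.snoc_castSucc, ← Fin.succ_castSucc,
          Fin.cons_succ]

lemma construct (hq : Fintype.card K = q) (w : ℕ → L) (d : ℕ) :
    ∃ a : Fin (d + 1) → L, a (Fin.last d) = 1 ∧
      ∀ j : ℕ, j < d → qmap hq a (w j) = 0 := by
  have hq1 : 1 ≤ q := hq ▸ Fintype.card_pos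
  induction d with
  | zero => exact ⟨fun _ => 1, rfl, fun j hj => by omega⟩
  | succ d ih =>
    obtain ⟨a, ha1, hav⟩ := ih
    obtain ⟨a', ha'1, ha'⟩ := qmap_step hq a (qmap hq a (w d) ^ (q - 1))
    refine ⟨a', by rw [ha'1, ha1, one_pow], ?_⟩
    intro j hj
    rcases Nat.lt_or_ge j d with h | h
    · rw [ha', hav j h, zero_pow (by omega : q ≠ 0), mul_zero, sub_zero]
    · have hjd : j = d := by omega
      subst hjd
      rw [ha', ← pow_succ, Nat.sub_add_cancel hq1, sub_self]

end Aux4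

section Aux5

variable {q : ℕ} {K L : Type*} [Field K] [Fintype K] [Field L] [Algebra K L]

lemma qmap_construct (hq : Fintype.card K = q) [FiniteDimensional K L] {k t n : ℕ}
    (hk : 1 ≤ k) (hkt : k ≤ t) (g : Fin n → L)
    (hg : Module.finrank K (Submodule.span K (Set.range g)) = t) :
    ∃ a : Fin k → L, (∃ j, qmap hq a (g j) ≠ 0) ∧
      Module.finrank K ((Submodule.span K (Set.range g)).map (qmap hq a)) ≤ t - k + 1 := by
  classical
  obtain ⟨d, rfl⟩ : ∃ d, k = d + 1 := ⟨k - 1, by omega⟩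
  have hdt : d ≤ t := by omega
  set V := Submodule.span K (Set.range g) with hV
  let b : Module.Basis (Fin t) K V := Module.finBasisOfFinrankEq K V hg
  let w : ℕ → L := fun j => if h : j < t then ((b ⟨j, h⟩ : V) : L) else 0
  obtain ⟨a, ha1, hav⟩ := construct hq w d
  have hane : a ≠ 0 := fun h => by
    have := congrFun h (Fin.last d)
    rw [ha1] at this
    exact one_ne_zero this
  have hker := qmap_ker_finrank hq a hane
  refine ⟨a, ?_, ?_⟩
  · by_contra h
    push_neg at h
    have hVker : V ≤ LinearMap.ker (qmap hq a) := by
      rw [hV, Submodule.span_le]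
      rintro _ ⟨j, rfl⟩
      exact h j
    have hle := Submodule.finrank_mono hVker
    rw [hg] at hle
    omega
  · -- the vanishing subspace U
    let ws : Fin d → L := fun i => ((b (Fin.castLE hdt i) : V) : L)
    have hwind : LinearIndependent K ws := by
      have h1 : LinearIndependent K (fun i : Fin t => ((b i : V) : L)) :=
        b.linearIndependent.map' V.subtype (Submodule.ker_subtype V)
      exact h1.comp (Fin.castLE hdt) (Fin.castLE_injective hdt)
    have hUrank : Module.finrank K (Submodule.span K (Set.range ws)) = d := by
      rw [finrank_span_eq_card hwind, Fintype.card_fin]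
    have hUV : Submodule.span K (Set.range ws) ≤ V := by
      rw [Submodule.span_le]
      rintro _ ⟨i, rfl⟩
      exact ((b (Fin.castLE hdt i)) : V).2
    have hUker : Submodule.span K (Set.range ws) ≤ LinearMap.ker (qmap hq a) := by
      rw [Submodule.span_le]
      rintro _ ⟨i, rfl⟩
      have hwi : ws i = w (i : ℕ) := by
        simp only [w, dif_pos (lt_of_lt_of_le i.isLt hdt)]
        congr 1
      rw [SetLike.mem_coe, LinearMap.mem_ker, hwi]
      exact hav (i : ℕ) i.isLt
    have hrn := LinearMap.finrank_range_add_finrank_ker ((qmap hq a).domRestrict V)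
    rw [LinearMap.range_domRestrict, hg] at hrn
    have hdle : d ≤ Module.finrank K
        (LinearMap.ker ((qmap hq a).domRestrict V)) := by
      have hle : Module.finrank K (Submodule.span K (Set.range ws)) ≤
          Module.finrank K (LinearMap.ker ((qmap hq a).domRestrict V)) := by
        apply LinearMap.finrank_le_finrank_of_injective
          (f := LinearMap.codRestrict (LinearMap.ker ((qmap hq a).domRestrict V))
            (LinearMap.codRestrict V (Submodule.span K (Set.range ws)).subtype
              (fun u => hUV u.2))
            (fun u => by
              have : qmap hq a (u : L) = 0 := hUker u.2
              exact this))
        intro x y hxy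
        have h1 := congrArg Subtype.val hxy
        have h2 := congrArg Subtype.val h1
        exact Subtype.ext h2
      rw [hUrank] at hle
      exact hle
    omega

end Aux5

section Aux6
open Pointwise

lemma finrank_mul_le' {K L : Type*} [Field K] [Field L] [Algebra K L] [FiniteDimensional K L]
    (W1 W2 : Submodule K L) :
    Module.finrank K (W1 * W2 : Submodule K L) ≤
      Module.finrank K W1 * Module.finrank K W2 := by
  classical
  set d1 := Module.finrank K W1
  set d2 := Module.finrank K W2
  let b1 : Module.Basis (Fin d1) K W1 := Module.finBasis K W1
  let b2 : Module.Basis (Fin d2) K W2 := Module.finBasis K W2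
  let v1 : Fin d1 → L := fun i => ((b1 i : W1) : L)
  let v2 : Fin d2 → L := fun i => ((b2 i : W2) : L)
  have h1 : Submodule.span K (Set.range v1) = W1 := by
    rw [show Set.range v1 = W1.subtype '' Set.range b1 from Set.range_comp _ _,
      Submodule.span_image, Module.Basis.span_eq, Submodule.map_top, Submodule.range_subtype]
  have h2 : Submodule.span K (Set.range v2) = W2 := by
    rw [show Set.range v2 = W2.subtype '' Set.range b2 from Set.range_comp _ _,
      Submodule.span_image, Module.Basis.span_eq, Submodule.map_top, Submodule.range_subtype]
  rw [← h1, ← h2, Submodule.span_mul_span]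
  have h3 : Set.range v1 * Set.range v2
      = Set.range (fun p : Fin d1 × Fin d2 => v1 p.1 * v2 p.2) := by
    ext z
    constructor
    · rintro ⟨_, ⟨i, rfl⟩, _, ⟨j, rfl⟩, rfl⟩
      exact ⟨(i, j), rfl⟩
    · rintro ⟨⟨i, j⟩, rfl⟩
      exact ⟨v1 i, ⟨i, rfl⟩, v2 j, ⟨j, rfl⟩, rfl⟩
  rw [h3]
  calc Module.finrank K (Submodule.span K
        (Set.range fun p : Fin d1 × Fin d2 => v1 p.1 * v2 p.2))
      ≤ Fintype.card (Fin d1 × Fin d2) := finrank_range_le_card _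
    _ = d1 * d2 := by simp

end Aux6

theorem egk_min_rank_distance_case2
    (q m n1 k1 n2 k2 t1 t2 : ℕ)
    (K L : Type*) [Field K] [Fintype K] [Field L] [Algebra K L]
    (hq : Fintype.card K = q) (hm : Module.finrank K L = m)
    (hk1pos : 1 ≤ k1) (hk1t1 : k1 ≤ t1) (ht1 : t1 ≤ min n1 m)
    (hk2pos : 1 ≤ k2) (hk2t2 : k2 ≤ t2) (ht2 : t2 ≤ min n2 m)
    (htm : t1 * t2 ≤ m) (hd : t1 - k1 ≤ t2 - k2)
    (g1 : Fin n1 → L) (hg1 : rankWeight K g1 = t1)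
    (g2 : Fin n2 → L) (hg2 : rankWeight K g2 = t2) :
    (∀ c : Fin n1 × Fin n2 → L,
      (∃ x : Fin k1 × Fin k2 → L, c = x ᵥ* (moore q g1 k1 ⊗ₖ moore q g2 k2)) →
      c ≠ 0 → t2 - k2 + 1 ≤ rankWeight K c) ∧
    ∃ c : Fin n1 × Fin n2 → L,
      (∃ x : Fin k1 × Fin k2 → L, c = x ᵥ* (moore q g1 k1 ⊗ₖ moore q g2 k2)) ∧
      c ≠ 0 ∧ rankWeight K c ≤ (t1 - k1 + 1) * (t2 - k2 + 1) := by
  classical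
  have h11 : (1 : ℕ) * 1 ≤ t1 * t2 := Nat.mul_le_mul (by omega) (by omega)
  have hm1 : 1 ≤ m := by omega
  haveI : FiniteDimensional K L := FiniteDimensional.of_finrank_pos (by omega)
  have hG : ∀ (x : Fin k1 × Fin k2 → L) (j : Fin n1 × Fin n2),
      (x ᵥ* (moore q g1 k1 ⊗ₖ moore q g2 k2)) j
        = ∑ i : Fin k1 × Fin k2, x i * (g1 j.1 ^ q ^ (i.1 : ℕ) * g2 j.2 ^ q ^ (i.2 : ℕ)) := by
    intro x j
    simp [Matrix.vecMul, dotProduct, moore, Matrix.kroneckerMap_apply]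
  constructor
  · rintro c ⟨x, rfl⟩ hcne
    obtain ⟨⟨j1, j2⟩, hj⟩ : ∃ j, (x ᵥ* (moore q g1 k1 ⊗ₖ moore q g2 k2)) j ≠ 0 := by
      by_contra h
      push_neg at h
      exact hcne (funext h)
    set b : Fin k2 → L := fun i2 => ∑ i1 : Fin k1, x (i1, i2) * g1 j1 ^ q ^ (i1 : ℕ) with hb
    have hrow : ∀ j2' : Fin n2,
        (x ᵥ* (moore q g1 k1 ⊗ₖ moore q g2 k2)) (j1, j2') = qmap hq b (g2 j2') := by
      intro j2'
      rw [hG, qmap_apply, Fintype.sum_prod_type]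
      rw [Finset.sum_comm]
      refine Finset.sum_congr rfl fun i2 _ => ?_
      rw [hb, Finset.sum_mul]
      exact Finset.sum_congr rfl fun i1 _ => by ring
    have hne : qmap hq b (g2 j2) ≠ 0 := by
      rw [← hrow j2]
      exact hj
    have hlb := qmap_lb hq hk2pos hk2t2 b g2 hg2 j2 hne
    rw [← span_qmap] at hlb
    refine hlb.trans ?_
    apply Submodule.finrank_mono
    apply Submodule.span_mono
    rintro _ ⟨j2', rfl⟩
    exact ⟨(j1, j2'), hrow j2'⟩
  · obtain ⟨a1, ⟨j1, hj1⟩, hb1⟩ := qmap_construct hq hk1pos hk1t1 g1 hg1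
    obtain ⟨a2, ⟨j2, hj2⟩, hb2⟩ := qmap_construct hq hk2pos hk2t2 g2 hg2
    refine ⟨fun j => qmap hq a1 (g1 j.1) * qmap hq a2 (g2 j.2),
      ⟨fun i => a1 i.1 * a2 i.2, ?_⟩, ?_, ?_⟩
    · funext j
      rw [hG, qmap_apply, qmap_apply, Finset.sum_mul_sum, Fintype.sum_prod_type]
      refine Finset.sum_congr rfl fun i1 _ => Finset.sum_congr rfl fun i2 _ => by ring
    · intro h
      have := congrFun h (j1, j2)
      exact (mul_ne_zero hj1 hj2) this
    · have hle : Submodule.span K (Set.range fun j : Fin n1 × Fin n2 =>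
          qmap hq a1 (g1 j.1) * qmap hq a2 (g2 j.2))
          ≤ ((Submodule.span K (Set.range g1)).map (qmap hq a1)) *
            ((Submodule.span K (Set.range g2)).map (qmap hq a2)) := by
        rw [Submodule.span_le]
        rintro _ ⟨j, rfl⟩
        apply Submodule.mul_mem_mul
        · exact ⟨g1 j.1, Submodule.subset_span ⟨j.1, rfl⟩, rfl⟩
        · exact ⟨g2 j.2, Submodule.subset_span ⟨j.2, rfl⟩, rfl⟩
      refine (Submodule.finrank_mono hle).trans ?_
      refine (finrank_mul_le' _ _).trans ?_
      exact Nat.mul_le_mul hb1 hb2
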